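/- Simulation of the λμ-calculus by the λ̄μμ̃-calculus: if a λμ-term (or command) t reduces to v by one λμ-reduction step (by any of the rules β, μ, μ', ρ, θ), then there exists a λ̄μμ̃-term (or command) u such that t† reduces to u by zero or more λ̄μμ̃-reduction steps and v† reduces to u by zero or more linear λ̄μμ̃-reduction steps. -/

import Mathlib

set_option autoImplicit true

namespace CHSim

/-- Lift a de Bruijn renaming under a binder. -/
def upr (ξ : ℕ → ℕ) : ℕ → ℕ
  | 0 => 0
  | k+1 => ξ k + 1

/-! ## The λμ-calculus (de Bruijn representation).

λ-variables and μ-variables each have their own name space of de Bruijn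
indices.  `abs t` is `λx.t` (binding λ-index 0) and `mabs c` is `μα.c`
(binding μ-index 0); `cmd a t` is the command `[a]t`. -/

mutual
  inductive Tm : Type
    | var : ℕ → Tm
    | abs : Tm → Tm
    | app : Tm → Tm → Tm
    | mabs : Cm → Tm
  inductive Cm : Type
    | cmd : ℕ → Tm → Cm
end

/-- λμ-contexts `e ::= ⟨α⟩ | ⟨β⟩(t ·) | e · t`. -/
inductive Ct : Type
  | cvar : ℕ → Ct
  | push : ℕ → Tm → Ct
  | cons : Ct → Tm → Ct

/-- Filling a λμ-context with a term: `⟨α⟩⟨t⟩ = [α]t`,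
`(⟨β⟩(u ·))⟨t⟩ = [β](u t)`, `(h · u)⟨t⟩ = h⟨t u⟩`. -/
def fill : Ct → Tm → Cm
  | .cvar a, t => .cmd a t
  | .push b u, t => .cmd b (.app u t)
  | .cons h u, t => fill h (.app t u)

mutual
  /-- Renaming of λ-variables in λμ-terms. -/
  def renLT (ξ : ℕ → ℕ) : Tm → Tm
    | .var x => .var (ξ x)
    | .abs t => .abs (renLT (upr ξ) t)
    | .app t u => .app (renLT ξ t) (renLT ξ u)
    | .mabs c => .mabs (renLC ξ c)
  /-- Renaming of λ-variables in λμ-commands. -/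
  def renLC (ξ : ℕ → ℕ) : Cm → Cm
    | .cmd a t => .cmd a (renLT ξ t)
end

mutual
  /-- Renaming of μ-variables in λμ-terms. -/
  def renMT (ξ : ℕ → ℕ) : Tm → Tm
    | .var x => .var x
    | .abs t => .abs (renMT ξ t)
    | .app t u => .app (renMT ξ t) (renMT ξ u)
    | .mabs c => .mabs (renMC (upr ξ) c)
  /-- Renaming of μ-variables in λμ-commands. -/
  def renMC (ξ : ℕ → ℕ) : Cm → Cm
    | .cmd a t => .cmd (ξ a) (renMT ξ t)
end

/-- Renaming of λ-variables in λμ-contexts. -/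
def renLE (ξ : ℕ → ℕ) : Ct → Ct
  | .cvar a => .cvar a
  | .push b t => .push b (renLT ξ t)
  | .cons e t => .cons (renLE ξ e) (renLT ξ t)

/-- Renaming of μ-variables in λμ-contexts. -/
def renME (ξ : ℕ → ℕ) : Ct → Ct
  | .cvar a => .cvar (ξ a)
  | .push b t => .push (ξ b) (renMT ξ t)
  | .cons e t => .cons (renME ξ e) (renMT ξ t)

/-- Lifting a λ-substitution under a λ-binder. -/
def upsL (σ : ℕ → Tm) : ℕ → Tm
  | 0 => .var 0
  | k+1 => renLT Nat.succ (σ k)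

mutual
  /-- (Capture-avoiding) substitution for λ-variables in λμ-terms. -/
  def lsubT (σ : ℕ → Tm) : Tm → Tm
    | .var x => σ x
    | .abs t => .abs (lsubT (upsL σ) t)
    | .app t u => .app (lsubT σ t) (lsubT σ u)
    | .mabs c => .mabs (lsubC (fun k => renMT Nat.succ (σ k)) c)
  /-- Substitution for λ-variables in λμ-commands. -/
  def lsubC (σ : ℕ → Tm) : Cm → Cm
    | .cmd a t => .cmd a (lsubT σ t)
end

/-- Substitution for λ-variables in λμ-contexts. -/
def lsubE (σ : ℕ → Tm) : Ct → Ct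
  | .cvar a => .cvar a
  | .push b t => .push b (lsubT σ t)
  | .cons e t => .cons (lsubE σ e) (lsubT σ t)

/-- The substitution replacing the λ-variable `x` by `u`. -/
def sub1L (x : ℕ) (u : Tm) : ℕ → Tm := fun k => if k = x then u else .var k

/-- The β-substitution replacing the bound λ-variable 0 by `u`. -/
def sub0L (u : Tm) : ℕ → Tm
  | 0 => u
  | k+1 => .var k

/-- Lifting a structural (μ-)substitution under a μ-binder. -/
def upsM (σ : ℕ → Ct) : ℕ → Ct
  | 0 => .cvar 0
  | k+1 => renME Nat.succ (σ k)

mutual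
  /-- Structural substitution of λμ-contexts for μ-variables in λμ-terms:
  every subcommand `[α]u` is replaced by `(σ α)⟨u[σ]⟩`. -/
  def msubT (σ : ℕ → Ct) : Tm → Tm
    | .var x => .var x
    | .abs t => .abs (msubT (fun k => renLE Nat.succ (σ k)) t)
    | .app t u => .app (msubT σ t) (msubT σ u)
    | .mabs c => .mabs (msubC (upsM σ) c)
  /-- Structural substitution in λμ-commands. -/
  def msubC (σ : ℕ → Ct) : Cm → Cm
    | .cmd a t => fill (σ a) (msubT σ t)
end

/-- Structural substitution in λμ-contexts (the head variable of
`⟨β⟩(t ·)` is, by the freshness convention of the translations,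
never the substituted variable, so it is left untouched). -/
def msubE (σ : ℕ → Ct) : Ct → Ct
  | .cvar a => σ a
  | .push b t => .push b (msubT σ t)
  | .cons e t => .cons (msubE σ e) (msubT σ t)

/-- The structural substitution replacing the μ-variable `a` by the context `e`. -/
def sub1M (a : ℕ) (e : Ct) : ℕ → Ct := fun k => if k = a then e else .cvar k

/-- The structural substitution replacing the bound μ-variable 0 by the
context `e` (removing the binder). -/
def sub0M (e : Ct) : ℕ → Ct
  | 0 => e
  | k+1 => .cvar k

mutual
  /-- Number of free occurrences of the λ-variable `x` in a λμ-term. -/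
  def cntLT (x : ℕ) : Tm → ℕ
    | .var y => if y = x then 1 else 0
    | .abs t => cntLT (x+1) t
    | .app t u => cntLT x t + cntLT x u
    | .mabs c => cntLC x c
  /-- Number of free occurrences of the λ-variable `x` in a λμ-command. -/
  def cntLC (x : ℕ) : Cm → ℕ
    | .cmd _ t => cntLT x t
end

/-- λμ-values `v ::= x | λx.t`. -/
inductive IsVal : Tm → Prop
  | var (x : ℕ) : IsVal (.var x)
  | abs (t : Tm) : IsVal (.abs t)

/-! ### Reduction in λμ: congruence closure of root rules -/

mutual
  /-- Congruence (compatible) closure of root relations, term level. -/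
  inductive KT (R1 : Tm → Tm → Prop) (R2 : Cm → Cm → Prop) : Tm → Tm → Prop
    | root {t t'} : R1 t t' → KT R1 R2 t t'
    | absC {t t'} : KT R1 R2 t t' → KT R1 R2 (.abs t) (.abs t')
    | appL {t t'} (u) : KT R1 R2 t t' → KT R1 R2 (.app t u) (.app t' u)
    | appR (t) {u u'} : KT R1 R2 u u' → KT R1 R2 (.app t u) (.app t u')
    | mabsC {c c'} : KC R1 R2 c c' → KT R1 R2 (.mabs c) (.mabs c')
  /-- Congruence (compatible) closure of root relations, command level. -/
  inductive KC (R1 : Tm → Tm → Prop) (R2 : Cm → Cm → Prop) : Cm → Cm → Prop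
    | root {c c'} : R2 c c' → KC R1 R2 c c'
    | cmdC (a) {t t'} : KT R1 R2 t t' → KC R1 R2 (.cmd a t) (.cmd a t')
end

/-- Term-level root rules of the undirected λμ-calculus: β, μ, μ', θ. -/
inductive RootT : Tm → Tm → Prop
  | beta (u t : Tm) : RootT (.app (.abs u) t) (lsubT (sub0L t) u)
  | mu (c : Cm) (t : Tm) : RootT (.app (.mabs c) t)
      (.mabs (msubC (sub1M 0 (.cons (.cvar 0) (renMT Nat.succ t))) c))
  | mu' (t : Tm) (c : Cm) : RootT (.app t (.mabs c))
      (.mabs (msubC (sub1M 0 (.push 0 (renMT Nat.succ t))) c))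
  | theta (t : Tm) : RootT (.mabs (.cmd 0 (renMT Nat.succ t))) t

/-- Command-level root rule of the λμ-calculus: ρ. -/
inductive RootC : Cm → Cm → Prop
  | rho (b : ℕ) (c : Cm) : RootC (.cmd b (.mabs c)) (msubC (sub0M (.cvar b)) c)

/-- Term-level *linear* root rules of the λμ-calculus: θ, and β when the
argument is a variable or the bound variable occurs exactly once. -/
inductive RootTlin : Tm → Tm → Prop
  | beta (u t : Tm) : ((∃ y, t = Tm.var y) ∨ cntLT 0 u = 1) →
      RootTlin (.app (.abs u) t) (lsubT (sub0L t) u)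
  | theta (t : Tm) : RootTlin (.mabs (.cmd 0 (renMT Nat.succ t))) t

/-- Term-level root rules of call-by-name λμ: β, μ, θ (no μ'). -/
inductive RootTn : Tm → Tm → Prop
  | beta (u t : Tm) : RootTn (.app (.abs u) t) (lsubT (sub0L t) u)
  | mu (c : Cm) (t : Tm) : RootTn (.app (.mabs c) t)
      (.mabs (msubC (sub1M 0 (.cons (.cvar 0) (renMT Nat.succ t))) c))
  | theta (t : Tm) : RootTn (.mabs (.cmd 0 (renMT Nat.succ t))) t

/-- Term-level root rules of call-by-value λμ: βv, μv, μ', θ. -/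
inductive RootTv : Tm → Tm → Prop
  | betav (u t : Tm) : IsVal t → RootTv (.app (.abs u) t) (lsubT (sub0L t) u)
  | muv (c : Cm) (t : Tm) : IsVal t → RootTv (.app (.mabs c) t)
      (.mabs (msubC (sub1M 0 (.cons (.cvar 0) (renMT Nat.succ t))) c))
  | mu' (t : Tm) (c : Cm) : RootTv (.app t (.mabs c))
      (.mabs (msubC (sub1M 0 (.push 0 (renMT Nat.succ t))) c))
  | theta (t : Tm) : RootTv (.mabs (.cmd 0 (renMT Nat.succ t))) t

/-- Term-level *linear call-by-value* root rules of λμ. -/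
inductive RootTvlin : Tm → Tm → Prop
  | betav (u t : Tm) : IsVal t → ((∃ y, t = Tm.var y) ∨ cntLT 0 u = 1) →
      RootTvlin (.app (.abs u) t) (lsubT (sub0L t) u)
  | theta (t : Tm) : RootTvlin (.mabs (.cmd 0 (renMT Nat.succ t))) t

/-- One-step λμ-reduction (β, μ, μ', ρ, θ), terms. -/
abbrev StepT := KT RootT RootC
/-- One-step λμ-reduction (β, μ, μ', ρ, θ), commands. -/
abbrev StepC := KC RootT RootC
/-- One-step linear λμ-reduction, terms. -/
abbrev LStepT := KT RootTlin RootC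
/-- One-step linear λμ-reduction, commands. -/
abbrev LStepC := KC RootTlin RootC
/-- One-step call-by-name λμ-reduction, terms. -/
abbrev StepNT := KT RootTn RootC
/-- One-step call-by-name λμ-reduction, commands. -/
abbrev StepNC := KC RootTn RootC
/-- One-step call-by-value λμ-reduction, terms. -/
abbrev StepVT := KT RootTv RootC
/-- One-step call-by-value λμ-reduction, commands. -/
abbrev StepVC := KC RootTv RootC
/-- One-step linear call-by-value λμ-reduction, terms. -/
abbrev LStepVT := KT RootTvlin RootC
/-- One-step linear call-by-value λμ-reduction, commands. -/
abbrev LStepVC := KC RootTvlin RootC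

/-- Reflexive-transitive closure. -/
abbrev Star {α : Type} (r : α → α → Prop) : α → α → Prop := Relation.ReflTransGen r

/-! ## The λ̄μμ̃-calculus (de Bruijn representation). -/

mutual
  inductive BTm : Type
    | var : ℕ → BTm
    | abs : BTm → BTm
    | mabs : BCm → BTm
  inductive BCm : Type
    | cut : BTm → BCt → BCm
  inductive BCt : Type
    | cvar : ℕ → BCt
    | cons : BTm → BCt → BCt
    | tmu : BCm → BCt
end

mutual
  /-- Renaming of λ-variables in λ̄μμ̃-terms. -/
  def brenLT (ξ : ℕ → ℕ) : BTm → BTm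
    | .var x => .var (ξ x)
    | .abs t => .abs (brenLT (upr ξ) t)
    | .mabs c => .mabs (brenLC ξ c)
  def brenLC (ξ : ℕ → ℕ) : BCm → BCm
    | .cut t e => .cut (brenLT ξ t) (brenLE ξ e)
  def brenLE (ξ : ℕ → ℕ) : BCt → BCt
    | .cvar a => .cvar a
    | .cons t e => .cons (brenLT ξ t) (brenLE ξ e)
    | .tmu c => .tmu (brenLC (upr ξ) c)
end

mutual
  /-- Renaming of μ-variables in λ̄μμ̃-terms. -/
  def brenMT (ξ : ℕ → ℕ) : BTm → BTm
    | .var x => .var x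
    | .abs t => .abs (brenMT ξ t)
    | .mabs c => .mabs (brenMC (upr ξ) c)
  def brenMC (ξ : ℕ → ℕ) : BCm → BCm
    | .cut t e => .cut (brenMT ξ t) (brenME ξ e)
  def brenME (ξ : ℕ → ℕ) : BCt → BCt
    | .cvar a => .cvar (ξ a)
    | .cons t e => .cons (brenMT ξ t) (brenME ξ e)
    | .tmu c => .tmu (brenMC ξ c)
end

def bupsL (σ : ℕ → BTm) : ℕ → BTm
  | 0 => .var 0
  | k+1 => brenLT Nat.succ (σ k)

mutual
  /-- Substitution for λ-variables in λ̄μμ̃-terms. -/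
  def blsubT (σ : ℕ → BTm) : BTm → BTm
    | .var x => σ x
    | .abs t => .abs (blsubT (bupsL σ) t)
    | .mabs c => .mabs (blsubC (fun k => brenMT Nat.succ (σ k)) c)
  def blsubC (σ : ℕ → BTm) : BCm → BCm
    | .cut t e => .cut (blsubT σ t) (blsubE σ e)
  def blsubE (σ : ℕ → BTm) : BCt → BCt
    | .cvar a => .cvar a
    | .cons t e => .cons (blsubT σ t) (blsubE σ e)
    | .tmu c => .tmu (blsubC (bupsL σ) c)
end

def bsub1L (x : ℕ) (u : BTm) : ℕ → BTm := fun k => if k = x then u else .var k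

def bsub0L (u : BTm) : ℕ → BTm
  | 0 => u
  | k+1 => .var k

def bupsM (σ : ℕ → BCt) : ℕ → BCt
  | 0 => .cvar 0
  | k+1 => brenME Nat.succ (σ k)

mutual
  /-- Structural substitution of contexts for μ-variables in λ̄μμ̃-terms. -/
  def bmsubT (σ : ℕ → BCt) : BTm → BTm
    | .var x => .var x
    | .abs t => .abs (bmsubT (fun k => brenLE Nat.succ (σ k)) t)
    | .mabs c => .mabs (bmsubC (bupsM σ) c)
  def bmsubC (σ : ℕ → BCt) : BCm → BCm
    | .cut t e => .cut (bmsubT σ t) (bmsubE σ e)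
  def bmsubE (σ : ℕ → BCt) : BCt → BCt
    | .cvar a => σ a
    | .cons t e => .cons (bmsubT σ t) (bmsubE σ e)
    | .tmu c => .tmu (bmsubC (fun k => brenLE Nat.succ (σ k)) c)
end

def bsub1M (a : ℕ) (e : BCt) : ℕ → BCt := fun k => if k = a then e else .cvar k

def bsub0M (e : BCt) : ℕ → BCt
  | 0 => e
  | k+1 => .cvar k

mutual
  /-- Number of free occurrences of the λ-variable `x` in a λ̄μμ̃-term. -/
  def bcntLT (x : ℕ) : BTm → ℕ
    | .var y => if y = x then 1 else 0
    | .abs t => bcntLT (x+1) t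
    | .mabs c => bcntLC x c
  def bcntLC (x : ℕ) : BCm → ℕ
    | .cut t e => bcntLT x t + bcntLE x e
  def bcntLE (x : ℕ) : BCt → ℕ
    | .cvar _ => 0
    | .cons t e => bcntLT x t + bcntLE x e
    | .tmu c => bcntLC (x+1) c
end

mutual
  /-- Number of free occurrences of the μ-variable `a` in a λ̄μμ̃-term. -/
  def bcntMT (a : ℕ) : BTm → ℕ
    | .var _ => 0
    | .abs t => bcntMT a t
    | .mabs c => bcntMC (a+1) c
  def bcntMC (a : ℕ) : BCm → ℕ
    | .cut t e => bcntMT a t + bcntME a e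
  def bcntME (a : ℕ) : BCt → ℕ
    | .cvar b => if b = a then 1 else 0
    | .cons t e => bcntMT a t + bcntME a e
    | .tmu c => bcntMC a c
end

/-- λ̄μμ̃-values `v ::= x | λx.t`. -/
inductive BIsVal : BTm → Prop
  | var (x : ℕ) : BIsVal (.var x)
  | abs (t : BTm) : BIsVal (.abs t)

/-- Stacks (the contexts of λ̄μμ̃_T): `s ::= α | t · s`. -/
inductive IsStk : BCt → Prop
  | cvar (a : ℕ) : IsStk (.cvar a)
  | cons (t : BTm) {s : BCt} : IsStk s → IsStk (.cons t s)

/-! ### Reduction in λ̄μμ̃: congruence closure of root rules -/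

mutual
  inductive JT (R1 : BTm → BTm → Prop) (R2 : BCm → BCm → Prop) : BTm → BTm → Prop
    | root {t t'} : R1 t t' → JT R1 R2 t t'
    | absC {t t'} : JT R1 R2 t t' → JT R1 R2 (.abs t) (.abs t')
    | mabsC {c c'} : JC R1 R2 c c' → JT R1 R2 (.mabs c) (.mabs c')
  inductive JC (R1 : BTm → BTm → Prop) (R2 : BCm → BCm → Prop) : BCm → BCm → Prop
    | root {c c'} : R2 c c' → JC R1 R2 c c'
    | cutL {t t'} (e) : JT R1 R2 t t' → JC R1 R2 (.cut t e) (.cut t' e)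
    | cutR (t) {e e'} : JE R1 R2 e e' → JC R1 R2 (.cut t e) (.cut t e')
  inductive JE (R1 : BTm → BTm → Prop) (R2 : BCm → BCm → Prop) : BCt → BCt → Prop
    | consL {t t'} (e) : JT R1 R2 t t' → JE R1 R2 (.cons t e) (.cons t' e)
    | consR (t) {e e'} : JE R1 R2 e e' → JE R1 R2 (.cons t e) (.cons t e')
    | tmuC {c c'} : JC R1 R2 c c' → JE R1 R2 (.tmu c) (.tmu c')
end

/-- The term-level root rule of λ̄μμ̃: θ (shared by all evaluation disciplines). -/
inductive BRootT : BTm → BTm → Prop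
  | theta (t : BTm) : BRootT (.mabs (.cut (brenMT Nat.succ t) (.cvar 0))) t

/-- Command-level root rules of the undirected λ̄μμ̃-calculus: β, μ, μ̃. -/
inductive BRootC : BCm → BCm → Prop
  | beta (u t : BTm) (e : BCt) :
      BRootC (.cut (.abs u) (.cons t e)) (.cut t (.tmu (.cut u (brenLE Nat.succ e))))
  | mu (c : BCm) (e : BCt) : BRootC (.cut (.mabs c) e) (bmsubC (bsub0M e) c)
  | mutilde (t : BTm) (c : BCm) : BRootC (.cut t (.tmu c)) (blsubC (bsub0L t) c)

/-- Command-level *linear* root rules of λ̄μμ̃: β always; μ (resp. μ̃) when the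
substituted context (resp. term) is a variable or the bound variable occurs
exactly once in the command. -/
inductive BRootClin : BCm → BCm → Prop
  | beta (u t : BTm) (e : BCt) :
      BRootClin (.cut (.abs u) (.cons t e)) (.cut t (.tmu (.cut u (brenLE Nat.succ e))))
  | mu (c : BCm) (e : BCt) : ((∃ a, e = BCt.cvar a) ∨ bcntMC 0 c = 1) →
      BRootClin (.cut (.mabs c) e) (bmsubC (bsub0M e) c)
  | mutilde (t : BTm) (c : BCm) : ((∃ x, t = BTm.var x) ∨ bcntLC 0 c = 1) →
      BRootClin (.cut t (.tmu c)) (blsubC (bsub0L t) c)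

/-- Command-level root rules of call-by-name λ̄μμ̃ (λ̄μμ̃_T): β, μₙ (stacks), μ̃. -/
inductive BRootCn : BCm → BCm → Prop
  | beta (u t : BTm) (e : BCt) :
      BRootCn (.cut (.abs u) (.cons t e)) (.cut t (.tmu (.cut u (brenLE Nat.succ e))))
  | mun (c : BCm) (s : BCt) : IsStk s → BRootCn (.cut (.mabs c) s) (bmsubC (bsub0M s) c)
  | mutilde (t : BTm) (c : BCm) : BRootCn (.cut t (.tmu c)) (blsubC (bsub0L t) c)

/-- Command-level *linear call-by-name* root rules of λ̄μμ̃. -/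
inductive BRootCnlin : BCm → BCm → Prop
  | beta (u t : BTm) (e : BCt) :
      BRootCnlin (.cut (.abs u) (.cons t e)) (.cut t (.tmu (.cut u (brenLE Nat.succ e))))
  | mun (c : BCm) (s : BCt) : IsStk s → ((∃ a, s = BCt.cvar a) ∨ bcntMC 0 c = 1) →
      BRootCnlin (.cut (.mabs c) s) (bmsubC (bsub0M s) c)
  | mutilde (t : BTm) (c : BCm) : ((∃ x, t = BTm.var x) ∨ bcntLC 0 c = 1) →
      BRootCnlin (.cut t (.tmu c)) (blsubC (bsub0L t) c)

/-- Command-level root rules of call-by-value λ̄μμ̃ (λ̄μμ̃_Q): β, μ, μ̃ᵥ (values). -/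
inductive BRootCv : BCm → BCm → Prop
  | beta (u t : BTm) (e : BCt) :
      BRootCv (.cut (.abs u) (.cons t e)) (.cut t (.tmu (.cut u (brenLE Nat.succ e))))
  | mu (c : BCm) (e : BCt) : BRootCv (.cut (.mabs c) e) (bmsubC (bsub0M e) c)
  | mutildev (v : BTm) (c : BCm) : BIsVal v →
      BRootCv (.cut v (.tmu c)) (blsubC (bsub0L v) c)

/-- Command-level *linear call-by-value* root rules of λ̄μμ̃. -/
inductive BRootCvlin : BCm → BCm → Prop
  | beta (u t : BTm) (e : BCt) :
      BRootCvlin (.cut (.abs u) (.cons t e)) (.cut t (.tmu (.cut u (brenLE Nat.succ e))))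
  | mu (c : BCm) (e : BCt) : ((∃ a, e = BCt.cvar a) ∨ bcntMC 0 c = 1) →
      BRootCvlin (.cut (.mabs c) e) (bmsubC (bsub0M e) c)
  | mutildev (v : BTm) (c : BCm) : BIsVal v → ((∃ x, v = BTm.var x) ∨ bcntLC 0 c = 1) →
      BRootCvlin (.cut v (.tmu c)) (blsubC (bsub0L v) c)

/-- Command-level root rules with β' instead of β: β', μ, μ̃. -/
inductive BRootCp : BCm → BCm → Prop
  | beta' (u t : BTm) (e : BCt) :
      BRootCp (.cut (.abs u) (.cons t e)) (.cut (blsubT (bsub0L t) u) e)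
  | mu (c : BCm) (e : BCt) : BRootCp (.cut (.mabs c) e) (bmsubC (bsub0M e) c)
  | mutilde (t : BTm) (c : BCm) : BRootCp (.cut t (.tmu c)) (blsubC (bsub0L t) c)

/-- Command-level call-by-name root rules with β': β', μₙ, μ̃. -/
inductive BRootCnp : BCm → BCm → Prop
  | beta' (u t : BTm) (e : BCt) :
      BRootCnp (.cut (.abs u) (.cons t e)) (.cut (blsubT (bsub0L t) u) e)
  | mun (c : BCm) (s : BCt) : IsStk s → BRootCnp (.cut (.mabs c) s) (bmsubC (bsub0M s) c)
  | mutilde (t : BTm) (c : BCm) : BRootCnp (.cut t (.tmu c)) (blsubC (bsub0L t) c)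

/-- Command-level call-by-value root rules with β': β' (values), μ, μ̃ᵥ. -/
inductive BRootCvp : BCm → BCm → Prop
  | beta' (u v : BTm) (e : BCt) : BIsVal v →
      BRootCvp (.cut (.abs u) (.cons v e)) (.cut (blsubT (bsub0L v) u) e)
  | mu (c : BCm) (e : BCt) : BRootCvp (.cut (.mabs c) e) (bmsubC (bsub0M e) c)
  | mutildev (v : BTm) (c : BCm) : BIsVal v →
      BRootCvp (.cut v (.tmu c)) (blsubC (bsub0L v) c)

/-- One-step λ̄μμ̃-reduction (β, μ, μ̃, θ), terms. -/
abbrev BStepT := JT BRootT BRootC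
abbrev BStepC := JC BRootT BRootC
abbrev BStepE := JE BRootT BRootC
/-- One-step linear λ̄μμ̃-reduction. -/
abbrev LBStepT := JT BRootT BRootClin
abbrev LBStepC := JC BRootT BRootClin
abbrev LBStepE := JE BRootT BRootClin
/-- One-step call-by-name λ̄μμ̃-reduction. -/
abbrev BStepNT := JT BRootT BRootCn
abbrev BStepNC := JC BRootT BRootCn
abbrev BStepNE := JE BRootT BRootCn
/-- One-step linear call-by-name λ̄μμ̃-reduction. -/
abbrev LBStepNT := JT BRootT BRootCnlin
abbrev LBStepNC := JC BRootT BRootCnlin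
/-- One-step call-by-value λ̄μμ̃-reduction. -/
abbrev BStepVT := JT BRootT BRootCv
abbrev BStepVC := JC BRootT BRootCv
/-- One-step linear call-by-value λ̄μμ̃-reduction. -/
abbrev LBStepVT := JT BRootT BRootCvlin
abbrev LBStepVC := JC BRootT BRootCvlin
/-- One-step λ̄μμ̃-reduction with β' (β', μ, μ̃, θ). -/
abbrev BStepPT := JT BRootT BRootCp
abbrev BStepPC := JC BRootT BRootCp
/-- One-step call-by-name λ̄μμ̃-reduction with β'. -/
abbrev BStepNPT := JT BRootT BRootCnp
abbrev BStepNPC := JC BRootT BRootCnp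
/-- One-step call-by-value λ̄μμ̃-reduction with β'. -/
abbrev BStepVPT := JT BRootT BRootCvp
abbrev BStepVPC := JC BRootT BRootCvp

/-! ## The translation `(·)†` from λμ to λ̄μμ̃ -/

mutual
  /-- `x† = x`, `(λx.u)† = λx.u†`, `(u v)† = μβ.⟨v† | μ̃y.⟨u† | y·β⟩⟩`
  (`y`, `β` fresh, realized by de Bruijn lifting), `(μα.c)† = μα.c†`. -/
  def dagT : Tm → BTm
    | .var x => .var x
    | .abs t => .abs (dagT t)
    | .app u v => .mabs (.cut (brenMT Nat.succ (dagT v))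
        (.tmu (.cut (brenLT Nat.succ (brenMT Nat.succ (dagT u)))
          (.cons (.var 0) (.cvar 0)))))
    | .mabs c => .mabs (dagC c)
  /-- `([α]t)† = ⟨t† | α⟩`. -/
  def dagC : Cm → BCm
    | .cmd a t => .cut (dagT t) (.cvar a)
end

/-- `⟨α⟩† = α`, `(⟨β⟩(t ·))† = μ̃y.⟨t† | y·β⟩`, `(h · t)† = t† · h†`. -/
def dagE : Ct → BCt
  | .cvar a => .cvar a
  | .push b t => .tmu (.cut (brenLT Nat.succ (dagT t)) (.cons (.var 0) (.cvar b)))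
  | .cons e t => .cons (dagT t) (dagE e)

/-! ## The translation `(·)∘` from λ̄μμ̃ to λμ -/

mutual
  /-- `x∘ = x`, `(λx.u)∘ = λx.u∘`, `(μα.c)∘ = μα.c∘`. -/
  def circT : BTm → Tm
    | .var x => .var x
    | .abs t => .abs (circT t)
    | .mabs c => .mabs (circC c)
  /-- `⟨t | e⟩∘ = e∘⟨t∘⟩`. -/
  def circC : BCm → Cm
    | .cut t e => fill (circE e) (circT t)
  /-- `α∘ = ⟨α⟩`, `(t · h)∘ = h∘ · t∘`,
  `(μ̃x.c)∘ = ⟨β⟩((λx.μδ.c∘) ·)` with `δ ∉ c` (realized by lifting). -/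
  def circE : BCt → Ct
    | .cvar a => .cvar a
    | .cons t e => .cons (circE e) (circT t)
    | .tmu c => .push 0 (.abs (.mabs (renMC Nat.succ (circC c))))
end


/-! ### Infrastructure lemmas -/

theorem upr_upr (ξ ζ : ℕ → ℕ) (k : ℕ) : upr ξ (upr ζ k) = upr (fun n => ξ (ζ n)) k := by
  cases k <;> rfl

theorem upr_congr {ξ ζ : ℕ → ℕ} (h : ∀ k, ξ k = ζ k) (k : ℕ) : upr ξ k = upr ζ k := by
  cases k <;> simp [upr, h]

mutual
theorem brenLT_brenLT (ξ ζ : ℕ → ℕ) : ∀ t, brenLT ξ (brenLT ζ t) = brenLT (fun k => ξ (ζ k)) t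
  | .var x => rfl
  | .abs t => by
      simp only [brenLT, brenLT_brenLT (upr ξ) (upr ζ) t]
      exact congrArg BTm.abs (congrFun (congrArg brenLT (funext (upr_upr ξ ζ))) t)
  | .mabs c => congrArg BTm.mabs (brenLC_brenLC ξ ζ c)
theorem brenLC_brenLC (ξ ζ : ℕ → ℕ) : ∀ c, brenLC ξ (brenLC ζ c) = brenLC (fun k => ξ (ζ k)) c
  | .cut t e => by simp only [brenLC, brenLT_brenLT ξ ζ t, brenLE_brenLE ξ ζ e]
theorem brenLE_brenLE (ξ ζ : ℕ → ℕ) : ∀ e, brenLE ξ (brenLE ζ e) = brenLE (fun k => ξ (ζ k)) e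
  | .cvar a => rfl
  | .cons t e => by simp only [brenLE, brenLT_brenLT ξ ζ t, brenLE_brenLE ξ ζ e]
  | .tmu c => by
      simp only [brenLE, brenLC_brenLC (upr ξ) (upr ζ) c]
      exact congrArg BCt.tmu (congrFun (congrArg brenLC (funext (upr_upr ξ ζ))) c)
end
mutual
theorem brenMT_brenMT (ξ ζ : ℕ → ℕ) : ∀ t, brenMT ξ (brenMT ζ t) = brenMT (fun k => ξ (ζ k)) t
  | .var x => rfl
  | .abs t => congrArg BTm.abs (brenMT_brenMT ξ ζ t)
  | .mabs c => by
      simp only [brenMT, brenMC_brenMC (upr ξ) (upr ζ) c]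
      exact congrArg BTm.mabs (congrFun (congrArg brenMC (funext (upr_upr ξ ζ))) c)
theorem brenMC_brenMC (ξ ζ : ℕ → ℕ) : ∀ c, brenMC ξ (brenMC ζ c) = brenMC (fun k => ξ (ζ k)) c
  | .cut t e => by simp only [brenMC, brenMT_brenMT ξ ζ t, brenME_brenME ξ ζ e]
theorem brenME_brenME (ξ ζ : ℕ → ℕ) : ∀ e, brenME ξ (brenME ζ e) = brenME (fun k => ξ (ζ k)) e
  | .cvar a => rfl
  | .cons t e => by simp only [brenME, brenMT_brenMT ξ ζ t, brenME_brenME ξ ζ e]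
  | .tmu c => congrArg BCt.tmu (brenMC_brenMC ξ ζ c)
end

mutual
theorem brenLT_brenMT (ξ ζ : ℕ → ℕ) : ∀ t, brenLT ξ (brenMT ζ t) = brenMT ζ (brenLT ξ t)
  | .var x => rfl
  | .abs t => congrArg BTm.abs (brenLT_brenMT (upr ξ) ζ t)
  | .mabs c => congrArg BTm.mabs (brenLC_brenMC ξ (upr ζ) c)
theorem brenLC_brenMC (ξ ζ : ℕ → ℕ) : ∀ c, brenLC ξ (brenMC ζ c) = brenMC ζ (brenLC ξ c)
  | .cut t e => by simp only [brenLC, brenMC, brenLT_brenMT ξ ζ t, brenLE_brenME ξ ζ e]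
theorem brenLE_brenME (ξ ζ : ℕ → ℕ) : ∀ e, brenLE ξ (brenME ζ e) = brenME ζ (brenLE ξ e)
  | .cvar a => rfl
  | .cons t e => by simp only [brenLE, brenME, brenLT_brenMT ξ ζ t, brenLE_brenME ξ ζ e]
  | .tmu c => congrArg BCt.tmu (brenLC_brenMC (upr ξ) ζ c)
end

/-! λ-substitution vs renamings -/

mutual
theorem blsubT_brenLT (σ : ℕ → BTm) (ξ : ℕ → ℕ) :
    ∀ t, blsubT σ (brenLT ξ t) = blsubT (fun k => σ (ξ k)) t
  | .var x => rfl
  | .abs t => by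
      simp only [brenLT, blsubT, blsubT_brenLT (bupsL σ) (upr ξ) t]
      refine congrArg BTm.abs (congrFun (congrArg blsubT (funext fun k => ?_)) t)
      cases k <;> rfl
  | .mabs c => by
      simp only [brenLT, blsubT, blsubC_brenLC (fun k => brenMT Nat.succ (σ k)) ξ c]
theorem blsubC_brenLC (σ : ℕ → BTm) (ξ : ℕ → ℕ) :
    ∀ c, blsubC σ (brenLC ξ c) = blsubC (fun k => σ (ξ k)) c
  | .cut t e => by simp only [brenLC, blsubC, blsubT_brenLT σ ξ t, blsubE_brenLE σ ξ e]
theorem blsubE_brenLE (σ : ℕ → BTm) (ξ : ℕ → ℕ) :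
    ∀ e, blsubE σ (brenLE ξ e) = blsubE (fun k => σ (ξ k)) e
  | .cvar a => rfl
  | .cons t e => by simp only [brenLE, blsubE, blsubT_brenLT σ ξ t, blsubE_brenLE σ ξ e]
  | .tmu c => by
      simp only [brenLE, blsubE, blsubC_brenLC (bupsL σ) (upr ξ) c]
      refine congrArg BCt.tmu (congrFun (congrArg blsubC (funext fun k => ?_)) c)
      cases k <;> rfl
end

mutual
theorem brenLT_blsubT (ξ : ℕ → ℕ) (σ : ℕ → BTm) :
    ∀ t, brenLT ξ (blsubT σ t) = blsubT (fun k => brenLT ξ (σ k)) t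
  | .var x => rfl
  | .abs t => by
      simp only [blsubT, brenLT, brenLT_blsubT (upr ξ) (bupsL σ) t]
      refine congrArg BTm.abs (congrFun (congrArg blsubT (funext fun k => ?_)) t)
      cases k with
      | zero => rfl
      | succ k =>
          show brenLT (upr ξ) (brenLT Nat.succ (σ k)) = brenLT Nat.succ (brenLT ξ (σ k))
          rw [brenLT_brenLT, brenLT_brenLT]
          exact congrFun (congrArg brenLT (funext fun k => rfl)) _
  | .mabs c => by
      simp only [blsubT, brenLT, brenLC_blsubC ξ (fun k => brenMT Nat.succ (σ k)) c]
      refine congrArg BTm.mabs (congrFun (congrArg blsubC (funext fun k => ?_)) c)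
      exact brenLT_brenMT ξ Nat.succ (σ k)
theorem brenLC_blsubC (ξ : ℕ → ℕ) (σ : ℕ → BTm) :
    ∀ c, brenLC ξ (blsubC σ c) = blsubC (fun k => brenLT ξ (σ k)) c
  | .cut t e => by simp only [blsubC, brenLC, brenLT_blsubT ξ σ t, brenLE_blsubE ξ σ e]
theorem brenLE_blsubE (ξ : ℕ → ℕ) (σ : ℕ → BTm) :
    ∀ e, brenLE ξ (blsubE σ e) = blsubE (fun k => brenLT ξ (σ k)) e
  | .cvar a => rfl
  | .cons t e => by simp only [blsubE, brenLE, brenLT_blsubT ξ σ t, brenLE_blsubE ξ σ e]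
  | .tmu c => by
      simp only [blsubE, brenLE, brenLC_blsubC (upr ξ) (bupsL σ) c]
      refine congrArg BCt.tmu (congrFun (congrArg blsubC (funext fun k => ?_)) c)
      cases k with
      | zero => rfl
      | succ k =>
          show brenLT (upr ξ) (brenLT Nat.succ (σ k)) = brenLT Nat.succ (brenLT ξ (σ k))
          rw [brenLT_brenLT, brenLT_brenLT]
          exact congrFun (congrArg brenLT (funext fun k => rfl)) _
end

mutual
theorem brenMT_blsubT (ξ : ℕ → ℕ) (σ : ℕ → BTm) :
    ∀ t, brenMT ξ (blsubT σ t) = blsubT (fun k => brenMT ξ (σ k)) (brenMT ξ t)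
  | .var x => rfl
  | .abs t => by
      simp only [blsubT, brenMT, brenMT_blsubT ξ (bupsL σ) t]
      refine congrArg BTm.abs (congrFun (congrArg blsubT (funext fun k => ?_)) (brenMT ξ t))
      cases k with
      | zero => rfl
      | succ k =>
          show brenMT ξ (brenLT Nat.succ (σ k)) = brenLT Nat.succ (brenMT ξ (σ k))
          rw [← brenLT_brenMT]
  | .mabs c => by
      simp only [blsubT, brenMT, brenMC_blsubC (upr ξ) (fun k => brenMT Nat.succ (σ k)) c]
      refine congrArg BTm.mabs (congrFun (congrArg blsubC (funext fun k => ?_)) _)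
      show brenMT (upr ξ) (brenMT Nat.succ (σ k)) = brenMT Nat.succ (brenMT ξ (σ k))
      rw [brenMT_brenMT, brenMT_brenMT]
      exact congrFun (congrArg brenMT (funext fun k => rfl)) _
theorem brenMC_blsubC (ξ : ℕ → ℕ) (σ : ℕ → BTm) :
    ∀ c, brenMC ξ (blsubC σ c) = blsubC (fun k => brenMT ξ (σ k)) (brenMC ξ c)
  | .cut t e => by simp only [blsubC, brenMC, brenMT_blsubT ξ σ t, brenME_blsubE ξ σ e]
theorem brenME_blsubE (ξ : ℕ → ℕ) (σ : ℕ → BTm) :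
    ∀ e, brenME ξ (blsubE σ e) = blsubE (fun k => brenMT ξ (σ k)) (brenME ξ e)
  | .cvar a => rfl
  | .cons t e => by simp only [blsubE, brenME, brenMT_blsubT ξ σ t, brenME_blsubE ξ σ e]
  | .tmu c => by
      simp only [blsubE, brenME, brenMC_blsubC ξ (bupsL σ) c]
      refine congrArg BCt.tmu (congrFun (congrArg blsubC (funext fun k => ?_)) _)
      cases k with
      | zero => rfl
      | succ k =>
          show brenMT ξ (brenLT Nat.succ (σ k)) = brenLT Nat.succ (brenMT ξ (σ k))
          rw [← brenLT_brenMT]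
end

mutual
theorem blsubT_id (σ : ℕ → BTm) (h : ∀ k, σ k = .var k) : ∀ t, blsubT σ t = t
  | .var x => h x
  | .abs t => by
      simp only [blsubT]
      refine congrArg BTm.abs (blsubT_id (bupsL σ) (fun k => ?_) t)
      cases k with
      | zero => rfl
      | succ k => show brenLT Nat.succ (σ k) = _; rw [h k]; rfl
  | .mabs c => by
      simp only [blsubT]
      exact congrArg BTm.mabs (blsubC_id _ (fun k => by rw [h k]; rfl) c)
theorem blsubC_id (σ : ℕ → BTm) (h : ∀ k, σ k = .var k) : ∀ c, blsubC σ c = c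
  | .cut t e => by simp only [blsubC, blsubT_id σ h t, blsubE_id σ h e]
theorem blsubE_id (σ : ℕ → BTm) (h : ∀ k, σ k = .var k) : ∀ e, blsubE σ e = e
  | .cvar a => rfl
  | .cons t e => by simp only [blsubE, blsubT_id σ h t, blsubE_id σ h e]
  | .tmu c => by
      simp only [blsubE]
      refine congrArg BCt.tmu (blsubC_id (bupsL σ) (fun k => ?_) c)
      cases k with
      | zero => rfl
      | succ k => show brenLT Nat.succ (σ k) = _; rw [h k]; rfl
end
/-! μ-substitution vs renamings -/

mutual
theorem bmsubT_brenMT (σ : ℕ → BCt) (ξ : ℕ → ℕ) :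
    ∀ t, bmsubT σ (brenMT ξ t) = bmsubT (fun k => σ (ξ k)) t
  | .var x => rfl
  | .abs t => by
      simp only [brenMT, bmsubT, bmsubT_brenMT (fun k => brenLE Nat.succ (σ k)) ξ t]
  | .mabs c => by
      simp only [brenMT, bmsubT, bmsubC_brenMC (bupsM σ) (upr ξ) c]
      refine congrArg BTm.mabs (congrFun (congrArg bmsubC (funext fun k => ?_)) c)
      cases k <;> rfl
theorem bmsubC_brenMC (σ : ℕ → BCt) (ξ : ℕ → ℕ) :
    ∀ c, bmsubC σ (brenMC ξ c) = bmsubC (fun k => σ (ξ k)) c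
  | .cut t e => by simp only [brenMC, bmsubC, bmsubT_brenMT σ ξ t, bmsubE_brenME σ ξ e]
theorem bmsubE_brenME (σ : ℕ → BCt) (ξ : ℕ → ℕ) :
    ∀ e, bmsubE σ (brenME ξ e) = bmsubE (fun k => σ (ξ k)) e
  | .cvar a => rfl
  | .cons t e => by simp only [brenME, bmsubE, bmsubT_brenMT σ ξ t, bmsubE_brenME σ ξ e]
  | .tmu c => by
      simp only [brenME, bmsubE, bmsubC_brenMC (fun k => brenLE Nat.succ (σ k)) ξ c]
end

mutual
theorem brenMT_bmsubT (ξ : ℕ → ℕ) (σ : ℕ → BCt) :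
    ∀ t, brenMT ξ (bmsubT σ t) = bmsubT (fun k => brenME ξ (σ k)) t
  | .var x => rfl
  | .abs t => by
      simp only [bmsubT, brenMT, brenMT_bmsubT ξ (fun k => brenLE Nat.succ (σ k)) t]
      refine congrArg BTm.abs (congrFun (congrArg bmsubT (funext fun k => ?_)) t)
      exact (brenLE_brenME Nat.succ ξ (σ k)).symm
  | .mabs c => by
      simp only [bmsubT, brenMT, brenMC_bmsubC (upr ξ) (bupsM σ) c]
      refine congrArg BTm.mabs (congrFun (congrArg bmsubC (funext fun k => ?_)) c)
      cases k with
      | zero => rfl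
      | succ k =>
          show brenME (upr ξ) (brenME Nat.succ (σ k)) = brenME Nat.succ (brenME ξ (σ k))
          rw [brenME_brenME, brenME_brenME]
          exact congrFun (congrArg brenME (funext fun k => rfl)) _
theorem brenMC_bmsubC (ξ : ℕ → ℕ) (σ : ℕ → BCt) :
    ∀ c, brenMC ξ (bmsubC σ c) = bmsubC (fun k => brenME ξ (σ k)) c
  | .cut t e => by simp only [bmsubC, brenMC, brenMT_bmsubT ξ σ t, brenME_bmsubE ξ σ e]
theorem brenME_bmsubE (ξ : ℕ → ℕ) (σ : ℕ → BCt) :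
    ∀ e, brenME ξ (bmsubE σ e) = bmsubE (fun k => brenME ξ (σ k)) e
  | .cvar a => rfl
  | .cons t e => by simp only [bmsubE, brenME, brenMT_bmsubT ξ σ t, brenME_bmsubE ξ σ e]
  | .tmu c => by
      simp only [bmsubE, brenME, brenMC_bmsubC ξ (fun k => brenLE Nat.succ (σ k)) c]
      refine congrArg BCt.tmu (congrFun (congrArg bmsubC (funext fun k => ?_)) c)
      exact (brenLE_brenME Nat.succ ξ (σ k)).symm
end

mutual
theorem brenLT_bmsubT (ξ : ℕ → ℕ) (σ : ℕ → BCt) :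
    ∀ t, brenLT ξ (bmsubT σ t) = bmsubT (fun k => brenLE ξ (σ k)) (brenLT ξ t)
  | .var x => rfl
  | .abs t => by
      simp only [bmsubT, brenLT, brenLT_bmsubT (upr ξ) (fun k => brenLE Nat.succ (σ k)) t]
      refine congrArg BTm.abs (congrFun (congrArg bmsubT (funext fun k => ?_)) _)
      show brenLE (upr ξ) (brenLE Nat.succ (σ k)) = brenLE Nat.succ (brenLE ξ (σ k))
      rw [brenLE_brenLE, brenLE_brenLE]
      exact congrFun (congrArg brenLE (funext fun k => rfl)) _
  | .mabs c => by
      simp only [bmsubT, brenLT, brenLC_bmsubC ξ (bupsM σ) c]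
      refine congrArg BTm.mabs (congrFun (congrArg bmsubC (funext fun k => ?_)) _)
      cases k with
      | zero => rfl
      | succ k => exact brenLE_brenME ξ Nat.succ (σ k)
theorem brenLC_bmsubC (ξ : ℕ → ℕ) (σ : ℕ → BCt) :
    ∀ c, brenLC ξ (bmsubC σ c) = bmsubC (fun k => brenLE ξ (σ k)) (brenLC ξ c)
  | .cut t e => by simp only [bmsubC, brenLC, brenLT_bmsubT ξ σ t, brenLE_bmsubE ξ σ e]
theorem brenLE_bmsubE (ξ : ℕ → ℕ) (σ : ℕ → BCt) :
    ∀ e, brenLE ξ (bmsubE σ e) = bmsubE (fun k => brenLE ξ (σ k)) (brenLE ξ e)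
  | .cvar a => rfl
  | .cons t e => by simp only [bmsubE, brenLE, brenLT_bmsubT ξ σ t, brenLE_bmsubE ξ σ e]
  | .tmu c => by
      simp only [bmsubE, brenLE, brenLC_bmsubC (upr ξ) (fun k => brenLE Nat.succ (σ k)) c]
      refine congrArg BCt.tmu (congrFun (congrArg bmsubC (funext fun k => ?_)) _)
      show brenLE (upr ξ) (brenLE Nat.succ (σ k)) = brenLE Nat.succ (brenLE ξ (σ k))
      rw [brenLE_brenLE, brenLE_brenLE]
      exact congrFun (congrArg brenLE (funext fun k => rfl)) _
end

mutual
theorem bmsubT_id (σ : ℕ → BCt) (h : ∀ k, σ k = .cvar k) : ∀ t, bmsubT σ t = t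
  | .var x => rfl
  | .abs t => by
      simp only [bmsubT]
      exact congrArg BTm.abs (bmsubT_id _ (fun k => by rw [h k]; rfl) t)
  | .mabs c => by
      simp only [bmsubT]
      refine congrArg BTm.mabs (bmsubC_id (bupsM σ) (fun k => ?_) c)
      cases k with
      | zero => rfl
      | succ k => show brenME Nat.succ (σ k) = _; rw [h k]; rfl
theorem bmsubC_id (σ : ℕ → BCt) (h : ∀ k, σ k = .cvar k) : ∀ c, bmsubC σ c = c
  | .cut t e => by simp only [bmsubC, bmsubT_id σ h t, bmsubE_id σ h e]
theorem bmsubE_id (σ : ℕ → BCt) (h : ∀ k, σ k = .cvar k) : ∀ e, bmsubE σ e = e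
  | .cvar a => h a
  | .cons t e => by simp only [bmsubE, bmsubT_id σ h t, bmsubE_id σ h e]
  | .tmu c => by
      simp only [bmsubE]
      exact congrArg BCt.tmu (bmsubC_id _ (fun k => by rw [h k]; rfl) c)
end
/-! ### Count lemmas -/

theorem upr_iff {ξ : ℕ → ℕ} {a b : ℕ} (h : ∀ k, ξ k = a ↔ k = b) :
    ∀ k, upr ξ k = a + 1 ↔ k = b + 1
  | 0 => by simp [upr]
  | k+1 => by
      simp only [upr, Nat.add_right_cancel_iff, Nat.succ.injEq]
      exact (h k).trans (by omega)

theorem upr_ne {ξ : ℕ → ℕ} {a : ℕ} (h : ∀ k, ξ k ≠ a) : ∀ k, upr ξ k ≠ a + 1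
  | 0 => by simp [upr]
  | k+1 => by simp only [upr]; exact fun hk => h k (by omega)

mutual
theorem bcntL_brenL (ξ : ℕ → ℕ) (a b : ℕ) (h : ∀ k, ξ k = a ↔ k = b) :
    ∀ t, bcntLT a (brenLT ξ t) = bcntLT b t
  | .var y => by simp only [brenLT, bcntLT]; exact if_congr (h y) rfl rfl
  | .abs t => bcntL_brenL (upr ξ) (a+1) (b+1) (upr_iff h) t
  | .mabs c => bcntLC_brenLC ξ a b h c
theorem bcntLC_brenLC (ξ : ℕ → ℕ) (a b : ℕ) (h : ∀ k, ξ k = a ↔ k = b) :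
    ∀ c, bcntLC a (brenLC ξ c) = bcntLC b c
  | .cut t e => by
      simp only [brenLC, bcntLC, bcntL_brenL ξ a b h t, bcntLE_brenLE ξ a b h e]
theorem bcntLE_brenLE (ξ : ℕ → ℕ) (a b : ℕ) (h : ∀ k, ξ k = a ↔ k = b) :
    ∀ e, bcntLE a (brenLE ξ e) = bcntLE b e
  | .cvar _ => rfl
  | .cons t e => by
      simp only [brenLE, bcntLE, bcntL_brenL ξ a b h t, bcntLE_brenLE ξ a b h e]
  | .tmu c => bcntLC_brenLC (upr ξ) (a+1) (b+1) (upr_iff h) c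
end

mutual
theorem bcntL_brenL0 (ξ : ℕ → ℕ) (a : ℕ) (h : ∀ k, ξ k ≠ a) :
    ∀ t, bcntLT a (brenLT ξ t) = 0
  | .var y => by simp only [brenLT, bcntLT]; exact if_neg (h y)
  | .abs t => bcntL_brenL0 (upr ξ) (a+1) (upr_ne h) t
  | .mabs c => bcntLC_brenLC0 ξ a h c
theorem bcntLC_brenLC0 (ξ : ℕ → ℕ) (a : ℕ) (h : ∀ k, ξ k ≠ a) :
    ∀ c, bcntLC a (brenLC ξ c) = 0
  | .cut t e => by
      simp only [brenLC, bcntLC, bcntL_brenL0 ξ a h t, bcntLE_brenLE0 ξ a h e]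
theorem bcntLE_brenLE0 (ξ : ℕ → ℕ) (a : ℕ) (h : ∀ k, ξ k ≠ a) :
    ∀ e, bcntLE a (brenLE ξ e) = 0
  | .cvar _ => rfl
  | .cons t e => by
      simp only [brenLE, bcntLE, bcntL_brenL0 ξ a h t, bcntLE_brenLE0 ξ a h e]
  | .tmu c => bcntLC_brenLC0 (upr ξ) (a+1) (upr_ne h) c
end

mutual
theorem bcntL_brenM (ξ : ℕ → ℕ) (a : ℕ) : ∀ t, bcntLT a (brenMT ξ t) = bcntLT a t
  | .var _ => rfl
  | .abs t => bcntL_brenM ξ (a+1) t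
  | .mabs c => bcntLC_brenMC (upr ξ) a c
theorem bcntLC_brenMC (ξ : ℕ → ℕ) (a : ℕ) : ∀ c, bcntLC a (brenMC ξ c) = bcntLC a c
  | .cut t e => by simp only [brenMC, bcntLC, bcntL_brenM ξ a t, bcntLE_brenME ξ a e]
theorem bcntLE_brenME (ξ : ℕ → ℕ) (a : ℕ) : ∀ e, bcntLE a (brenME ξ e) = bcntLE a e
  | .cvar _ => rfl
  | .cons t e => by simp only [brenME, bcntLE, bcntL_brenM ξ a t, bcntLE_brenME ξ a e]
  | .tmu c => bcntLC_brenMC ξ (a+1) c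
end

mutual
theorem bcntM_brenM (ξ : ℕ → ℕ) (a b : ℕ) (h : ∀ k, ξ k = a ↔ k = b) :
    ∀ t, bcntMT a (brenMT ξ t) = bcntMT b t
  | .var _ => rfl
  | .abs t => bcntM_brenM ξ a b h t
  | .mabs c => bcntMC_brenMC (upr ξ) (a+1) (b+1) (upr_iff h) c
theorem bcntMC_brenMC (ξ : ℕ → ℕ) (a b : ℕ) (h : ∀ k, ξ k = a ↔ k = b) :
    ∀ c, bcntMC a (brenMC ξ c) = bcntMC b c
  | .cut t e => by
      simp only [brenMC, bcntMC, bcntM_brenM ξ a b h t, bcntME_brenME ξ a b h e]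
theorem bcntME_brenME (ξ : ℕ → ℕ) (a b : ℕ) (h : ∀ k, ξ k = a ↔ k = b) :
    ∀ e, bcntME a (brenME ξ e) = bcntME b e
  | .cvar y => by simp only [brenME, bcntME]; exact if_congr (h y) rfl rfl
  | .cons t e => by
      simp only [brenME, bcntME, bcntM_brenM ξ a b h t, bcntME_brenME ξ a b h e]
  | .tmu c => bcntMC_brenMC ξ a b h c
end

mutual
theorem bcntM_brenM0 (ξ : ℕ → ℕ) (a : ℕ) (h : ∀ k, ξ k ≠ a) :
    ∀ t, bcntMT a (brenMT ξ t) = 0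
  | .var _ => rfl
  | .abs t => bcntM_brenM0 ξ a h t
  | .mabs c => bcntMC_brenMC0 (upr ξ) (a+1) (upr_ne h) c
theorem bcntMC_brenMC0 (ξ : ℕ → ℕ) (a : ℕ) (h : ∀ k, ξ k ≠ a) :
    ∀ c, bcntMC a (brenMC ξ c) = 0
  | .cut t e => by
      simp only [brenMC, bcntMC, bcntM_brenM0 ξ a h t, bcntME_brenME0 ξ a h e]
theorem bcntME_brenME0 (ξ : ℕ → ℕ) (a : ℕ) (h : ∀ k, ξ k ≠ a) :
    ∀ e, bcntME a (brenME ξ e) = 0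
  | .cvar y => by simp only [brenME, bcntME]; exact if_neg (h y)
  | .cons t e => by
      simp only [brenME, bcntME, bcntM_brenM0 ξ a h t, bcntME_brenME0 ξ a h e]
  | .tmu c => bcntMC_brenMC0 ξ a h c
end

mutual
theorem bcntM_brenL (ξ : ℕ → ℕ) (a : ℕ) : ∀ t, bcntMT a (brenLT ξ t) = bcntMT a t
  | .var _ => rfl
  | .abs t => bcntM_brenL (upr ξ) a t
  | .mabs c => bcntMC_brenLC ξ (a+1) c
theorem bcntMC_brenLC (ξ : ℕ → ℕ) (a : ℕ) : ∀ c, bcntMC a (brenLC ξ c) = bcntMC a c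
  | .cut t e => by simp only [brenLC, bcntMC, bcntM_brenL ξ a t, bcntME_brenLE ξ a e]
theorem bcntME_brenLE (ξ : ℕ → ℕ) (a : ℕ) : ∀ e, bcntME a (brenLE ξ e) = bcntME a e
  | .cvar _ => rfl
  | .cons t e => by simp only [brenLE, bcntME, bcntM_brenL ξ a t, bcntME_brenLE ξ a e]
  | .tmu c => bcntMC_brenLC (upr ξ) a c
end
/-! ### Root rules are preserved by renamings -/

theorem upr_zero_iff (ξ : ℕ → ℕ) : ∀ k, upr ξ k = 0 ↔ k = 0
  | 0 => by simp [upr]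
  | k+1 => by simp [upr]

theorem brenLE_shift (ξ : ℕ → ℕ) (e : BCt) :
    brenLE (upr ξ) (brenLE Nat.succ e) = brenLE Nat.succ (brenLE ξ e) := by
  rw [brenLE_brenLE, brenLE_brenLE]
  exact congrFun (congrArg brenLE (funext fun k => rfl)) e

theorem BRootT_renL (ξ : ℕ → ℕ) {t t' : BTm} (h : BRootT t t') :
    BRootT (brenLT ξ t) (brenLT ξ t') := by
  cases h with
  | theta t =>
      simp only [brenLT, brenLC, brenLE, brenLT_brenMT]
      exact BRootT.theta _

theorem BRootT_renM (ξ : ℕ → ℕ) {t t' : BTm} (h : BRootT t t') :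
    BRootT (brenMT ξ t) (brenMT ξ t') := by
  cases h with
  | theta t =>
      simp only [brenMT, brenMC, brenME, brenMT_brenMT]
      have e1 : (fun k => upr ξ (Nat.succ k)) = (fun k => Nat.succ (ξ k)) :=
        funext fun k => rfl
      have e2 : upr ξ 0 = 0 := rfl
      rw [e1, e2, ← brenMT_brenMT]
      exact BRootT.theta _

theorem BRootC_renL (ξ : ℕ → ℕ) {c c' : BCm} (h : BRootC c c') :
    BRootC (brenLC ξ c) (brenLC ξ c') := by
  cases h with
  | beta u t e =>
      simp only [brenLC, brenLT, brenLE, brenLE_shift]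
      exact BRootC.beta _ _ _
  | mu c e =>
      simp only [brenLC, brenLT, brenLC_bmsubC]
      have : (fun k => brenLE ξ (bsub0M e k)) = bsub0M (brenLE ξ e) :=
        funext fun k => by cases k <;> rfl
      rw [this]
      exact BRootC.mu _ _
  | mutilde t c =>
      simp only [brenLC, brenLE, brenLC_blsubC]
      have : (fun k => brenLT ξ (bsub0L t k)) = (fun k => bsub0L (brenLT ξ t) (upr ξ k)) :=
        funext fun k => by cases k <;> rfl
      rw [this, ← blsubC_brenLC]
      exact BRootC.mutilde _ _

theorem BRootC_renM (ξ : ℕ → ℕ) {c c' : BCm} (h : BRootC c c') :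
    BRootC (brenMC ξ c) (brenMC ξ c') := by
  cases h with
  | beta u t e =>
      simp only [brenMC, brenMT, brenME]
      rw [(brenLE_brenME Nat.succ ξ e).symm]
      exact BRootC.beta _ _ _
  | mu c e =>
      simp only [brenMC, brenMT, brenMC_bmsubC]
      have : (fun k => brenME ξ (bsub0M e k)) = (fun k => bsub0M (brenME ξ e) (upr ξ k)) :=
        funext fun k => by cases k <;> rfl
      rw [this, ← bmsubC_brenMC]
      exact BRootC.mu _ _
  | mutilde t c =>
      simp only [brenMC, brenME, brenMC_blsubC]
      have : (fun k => brenMT ξ (bsub0L t k)) = bsub0L (brenMT ξ t) :=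
        funext fun k => by cases k <;> rfl
      rw [this]
      exact BRootC.mutilde _ _

theorem BRootClin_renL (ξ : ℕ → ℕ) {c c' : BCm} (h : BRootClin c c') :
    BRootClin (brenLC ξ c) (brenLC ξ c') := by
  cases h with
  | beta u t e =>
      simp only [brenLC, brenLT, brenLE, brenLE_shift]
      exact BRootClin.beta _ _ _
  | mu c e hc =>
      simp only [brenLC, brenLT, brenLC_bmsubC]
      have : (fun k => brenLE ξ (bsub0M e k)) = bsub0M (brenLE ξ e) :=
        funext fun k => by cases k <;> rfl
      rw [this]
      refine BRootClin.mu _ _ ?_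
      rcases hc with ⟨a, rfl⟩ | hc
      · exact Or.inl ⟨a, rfl⟩
      · exact Or.inr ((bcntMC_brenLC ξ 0 c).trans hc)
  | mutilde t c hc =>
      simp only [brenLC, brenLE, brenLC_blsubC]
      have : (fun k => brenLT ξ (bsub0L t k)) = (fun k => bsub0L (brenLT ξ t) (upr ξ k)) :=
        funext fun k => by cases k <;> rfl
      rw [this, ← blsubC_brenLC]
      refine BRootClin.mutilde _ _ ?_
      rcases hc with ⟨x, rfl⟩ | hc
      · exact Or.inl ⟨ξ x, rfl⟩
      · exact Or.inr ((bcntLC_brenLC (upr ξ) 0 0 (upr_zero_iff ξ) c).trans hc)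

theorem BRootClin_renM (ξ : ℕ → ℕ) {c c' : BCm} (h : BRootClin c c') :
    BRootClin (brenMC ξ c) (brenMC ξ c') := by
  cases h with
  | beta u t e =>
      simp only [brenMC, brenMT, brenME]
      rw [(brenLE_brenME Nat.succ ξ e).symm]
      exact BRootClin.beta _ _ _
  | mu c e hc =>
      simp only [brenMC, brenMT, brenMC_bmsubC]
      have : (fun k => brenME ξ (bsub0M e k)) = (fun k => bsub0M (brenME ξ e) (upr ξ k)) :=
        funext fun k => by cases k <;> rfl
      rw [this, ← bmsubC_brenMC]
      refine BRootClin.mu _ _ ?_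
      rcases hc with ⟨a, rfl⟩ | hc
      · exact Or.inl ⟨ξ a, rfl⟩
      · exact Or.inr ((bcntMC_brenMC (upr ξ) 0 0 (upr_zero_iff ξ) c).trans hc)
  | mutilde t c hc =>
      simp only [brenMC, brenME, brenMC_blsubC]
      have : (fun k => brenMT ξ (bsub0L t k)) = bsub0L (brenMT ξ t) :=
        funext fun k => by cases k <;> rfl
      rw [this]
      refine BRootClin.mutilde _ _ ?_
      rcases hc with ⟨x, rfl⟩ | hc
      · exact Or.inl ⟨x, rfl⟩
      · exact Or.inr ((bcntLC_brenMC ξ 0 c).trans hc)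

/-! ### One-step reduction is preserved by renamings -/

mutual
theorem JT_renL {R1 : BTm → BTm → Prop} {R2 : BCm → BCm → Prop}
    (H1 : ∀ (ξ : ℕ → ℕ) {t t'}, R1 t t' → R1 (brenLT ξ t) (brenLT ξ t'))
    (H2 : ∀ (ξ : ℕ → ℕ) {c c'}, R2 c c' → R2 (brenLC ξ c) (brenLC ξ c'))
    (ξ : ℕ → ℕ) {t t' : BTm} (h : JT R1 R2 t t') :
    JT R1 R2 (brenLT ξ t) (brenLT ξ t') :=
  match h with
  | .root h => .root (H1 ξ h)
  | .absC h => .absC (JT_renL H1 H2 (upr ξ) h)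
  | .mabsC h => .mabsC (JC_renL H1 H2 ξ h)
theorem JC_renL {R1 : BTm → BTm → Prop} {R2 : BCm → BCm → Prop}
    (H1 : ∀ (ξ : ℕ → ℕ) {t t'}, R1 t t' → R1 (brenLT ξ t) (brenLT ξ t'))
    (H2 : ∀ (ξ : ℕ → ℕ) {c c'}, R2 c c' → R2 (brenLC ξ c) (brenLC ξ c'))
    (ξ : ℕ → ℕ) {c c' : BCm} (h : JC R1 R2 c c') :
    JC R1 R2 (brenLC ξ c) (brenLC ξ c') :=
  match h with
  | .root h => .root (H2 ξ h)
  | .cutL e h => .cutL _ (JT_renL H1 H2 ξ h)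
  | .cutR t h => .cutR _ (JE_renL H1 H2 ξ h)
theorem JE_renL {R1 : BTm → BTm → Prop} {R2 : BCm → BCm → Prop}
    (H1 : ∀ (ξ : ℕ → ℕ) {t t'}, R1 t t' → R1 (brenLT ξ t) (brenLT ξ t'))
    (H2 : ∀ (ξ : ℕ → ℕ) {c c'}, R2 c c' → R2 (brenLC ξ c) (brenLC ξ c'))
    (ξ : ℕ → ℕ) {e e' : BCt} (h : JE R1 R2 e e') :
    JE R1 R2 (brenLE ξ e) (brenLE ξ e') :=
  match h with
  | .consL e h => .consL _ (JT_renL H1 H2 ξ h)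
  | .consR t h => .consR _ (JE_renL H1 H2 ξ h)
  | .tmuC h => .tmuC (JC_renL H1 H2 (upr ξ) h)
end

mutual
theorem JT_renM {R1 : BTm → BTm → Prop} {R2 : BCm → BCm → Prop}
    (H1 : ∀ (ξ : ℕ → ℕ) {t t'}, R1 t t' → R1 (brenMT ξ t) (brenMT ξ t'))
    (H2 : ∀ (ξ : ℕ → ℕ) {c c'}, R2 c c' → R2 (brenMC ξ c) (brenMC ξ c'))
    (ξ : ℕ → ℕ) {t t' : BTm} (h : JT R1 R2 t t') :
    JT R1 R2 (brenMT ξ t) (brenMT ξ t') :=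
  match h with
  | .root h => .root (H1 ξ h)
  | .absC h => .absC (JT_renM H1 H2 ξ h)
  | .mabsC h => .mabsC (JC_renM H1 H2 (upr ξ) h)
theorem JC_renM {R1 : BTm → BTm → Prop} {R2 : BCm → BCm → Prop}
    (H1 : ∀ (ξ : ℕ → ℕ) {t t'}, R1 t t' → R1 (brenMT ξ t) (brenMT ξ t'))
    (H2 : ∀ (ξ : ℕ → ℕ) {c c'}, R2 c c' → R2 (brenMC ξ c) (brenMC ξ c'))
    (ξ : ℕ → ℕ) {c c' : BCm} (h : JC R1 R2 c c') :
    JC R1 R2 (brenMC ξ c) (brenMC ξ c') :=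
  match h with
  | .root h => .root (H2 ξ h)
  | .cutL e h => .cutL _ (JT_renM H1 H2 ξ h)
  | .cutR t h => .cutR _ (JE_renM H1 H2 ξ h)
theorem JE_renM {R1 : BTm → BTm → Prop} {R2 : BCm → BCm → Prop}
    (H1 : ∀ (ξ : ℕ → ℕ) {t t'}, R1 t t' → R1 (brenMT ξ t) (brenMT ξ t'))
    (H2 : ∀ (ξ : ℕ → ℕ) {c c'}, R2 c c' → R2 (brenMC ξ c) (brenMC ξ c'))
    (ξ : ℕ → ℕ) {e e' : BCt} (h : JE R1 R2 e e') :
    JE R1 R2 (brenME ξ e) (brenME ξ e') :=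
  match h with
  | .consL e h => .consL _ (JT_renM H1 H2 ξ h)
  | .consR t h => .consR _ (JE_renM H1 H2 ξ h)
  | .tmuC h => .tmuC (JC_renM H1 H2 ξ h)
end

/-- Renaming λ-variables preserves `BStepT` reduction sequences. -/
theorem star_BStepT_renL (ξ : ℕ → ℕ) {t t' : BTm} (h : Star BStepT t t') :
    Star BStepT (brenLT ξ t) (brenLT ξ t') :=
  Relation.ReflTransGen.lift (brenLT ξ) (fun _ _ h => JT_renL (fun ξ => BRootT_renL ξ) (fun ξ => BRootC_renL ξ) ξ h) _ _ h

theorem star_BStepT_renM (ξ : ℕ → ℕ) {t t' : BTm} (h : Star BStepT t t') :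
    Star BStepT (brenMT ξ t) (brenMT ξ t') :=
  Relation.ReflTransGen.lift (brenMT ξ) (fun _ _ h => JT_renM (fun ξ => BRootT_renM ξ) (fun ξ => BRootC_renM ξ) ξ h) _ _ h

theorem star_LBStepT_renL (ξ : ℕ → ℕ) {t t' : BTm} (h : Star LBStepT t t') :
    Star LBStepT (brenLT ξ t) (brenLT ξ t') :=
  Relation.ReflTransGen.lift (brenLT ξ) (fun _ _ h => JT_renL (fun ξ => BRootT_renL ξ) (fun ξ => BRootClin_renL ξ) ξ h) _ _ h

theorem star_LBStepT_renM (ξ : ℕ → ℕ) {t t' : BTm} (h : Star LBStepT t t') :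
    Star LBStepT (brenMT ξ t) (brenMT ξ t') :=
  Relation.ReflTransGen.lift (brenMT ξ) (fun _ _ h => JT_renM (fun ξ => BRootT_renM ξ) (fun ξ => BRootClin_renM ξ) ξ h) _ _ h
/-! ### The translation commutes with renamings and substitution -/

theorem brenLT_shift (ξ : ℕ → ℕ) (x : BTm) :
    brenLT (upr ξ) (brenLT Nat.succ x) = brenLT Nat.succ (brenLT ξ x) := by
  rw [brenLT_brenLT, brenLT_brenLT]
  exact congrFun (congrArg brenLT (funext fun k => rfl)) x

theorem brenMT_shift (ξ : ℕ → ℕ) (x : BTm) :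
    brenMT (upr ξ) (brenMT Nat.succ x) = brenMT Nat.succ (brenMT ξ x) := by
  rw [brenMT_brenMT, brenMT_brenMT]
  exact congrFun (congrArg brenMT (funext fun k => rfl)) x

mutual
theorem dagT_renL (ξ : ℕ → ℕ) : ∀ t, dagT (renLT ξ t) = brenLT ξ (dagT t)
  | .var x => rfl
  | .abs t => congrArg BTm.abs (dagT_renL (upr ξ) t)
  | .mabs c => congrArg BTm.mabs (dagC_renL ξ c)
  | .app u v => by
      simp only [renLT, dagT, dagT_renL ξ u, dagT_renL ξ v, brenLT, brenLC, brenLE, upr]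
      rw [brenLT_brenMT ξ Nat.succ (dagT v), brenLT_shift ξ (brenMT Nat.succ (dagT u)),
        brenLT_brenMT ξ Nat.succ (dagT u)]
theorem dagC_renL (ξ : ℕ → ℕ) : ∀ c, dagC (renLC ξ c) = brenLC ξ (dagC c)
  | .cmd a t => by simp only [renLC, dagC, dagT_renL ξ t, brenLC, brenLE]
end

mutual
theorem dagT_renM (ξ : ℕ → ℕ) : ∀ t, dagT (renMT ξ t) = brenMT ξ (dagT t)
  | .var x => rfl
  | .abs t => congrArg BTm.abs (dagT_renM ξ t)
  | .mabs c => congrArg BTm.mabs (dagC_renM (upr ξ) c)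
  | .app u v => by
      simp only [renMT, dagT, dagT_renM ξ u, dagT_renM ξ v, brenMT, brenMC, brenME, upr]
      rw [brenMT_shift ξ (dagT v), ← brenLT_brenMT Nat.succ (upr ξ) (brenMT Nat.succ (dagT u)),
        brenMT_shift ξ (dagT u), brenLT_brenMT Nat.succ Nat.succ (brenMT ξ (dagT u))]
theorem dagC_renM (ξ : ℕ → ℕ) : ∀ c, dagC (renMC ξ c) = brenMC ξ (dagC c)
  | .cmd a t => by simp only [renMC, dagC, dagT_renM ξ t, brenMC, brenME]
end

theorem dagE_renL (ξ : ℕ → ℕ) : ∀ e, dagE (renLE ξ e) = brenLE ξ (dagE e)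
  | .cvar a => rfl
  | .push b t => by
      simp only [renLE, dagE, dagT_renL ξ t, brenLE, brenLC, brenLT, upr]
      rw [brenLT_shift]
  | .cons e t => by
      simp only [renLE, dagE, dagT_renL ξ t, dagE_renL ξ e, brenLE]

theorem dagE_renM (ξ : ℕ → ℕ) : ∀ e, dagE (renME ξ e) = brenME ξ (dagE e)
  | .cvar a => rfl
  | .push b t => by
      simp only [renME, dagE, dagT_renM ξ t, brenME, brenMC, brenMT]
      rw [← brenLT_brenMT Nat.succ ξ (dagT t)]
  | .cons e t => by
      simp only [renME, dagE, dagT_renM ξ t, dagE_renM ξ e, brenME]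

mutual
theorem dagT_lsub (σ : ℕ → Tm) : ∀ t, dagT (lsubT σ t) = blsubT (fun k => dagT (σ k)) (dagT t)
  | .var x => rfl
  | .abs t => by
      simp only [lsubT, dagT, dagT_lsub (upsL σ) t, blsubT]
      refine congrArg BTm.abs (congrFun (congrArg blsubT (funext fun k => ?_)) (dagT t))
      cases k with
      | zero => rfl
      | succ k => show dagT (renLT Nat.succ (σ k)) = _; rw [dagT_renL]; rfl
  | .mabs c => by
      simp only [lsubT, dagT, dagC_lsub (fun k => renMT Nat.succ (σ k)) c, blsubT]
      refine congrArg BTm.mabs (congrFun (congrArg blsubC (funext fun k => ?_)) (dagC c))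
      exact dagT_renM Nat.succ (σ k)
  | .app u v => by
      simp only [lsubT, dagT, dagT_lsub σ u, dagT_lsub σ v, blsubT, blsubC, blsubE]
      rw [brenMT_blsubT]
      congr 1
      rw [blsubT_brenLT, brenMT_blsubT, brenLT_blsubT]
      rfl
theorem dagC_lsub (σ : ℕ → Tm) : ∀ c, dagC (lsubC σ c) = blsubC (fun k => dagT (σ k)) (dagC c)
  | .cmd a t => by simp only [lsubC, dagC, dagT_lsub σ t, blsubC, blsubE]
end
/-! ### Star congruence helpers -/

theorem star_absC {R1 R2} {t t' : BTm} (h : Star (JT R1 R2) t t') :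
    Star (JT R1 R2) (.abs t) (.abs t') :=
  Relation.ReflTransGen.lift BTm.abs (fun _ _ h => JT.absC h) _ _ h

theorem star_mabsC {R1 R2} {c c' : BCm} (h : Star (JC R1 R2) c c') :
    Star (JT R1 R2) (.mabs c) (.mabs c') :=
  Relation.ReflTransGen.lift BTm.mabs (fun _ _ h => JT.mabsC h) _ _ h

theorem star_cutL {R1 R2} (e : BCt) {t t' : BTm} (h : Star (JT R1 R2) t t') :
    Star (JC R1 R2) (.cut t e) (.cut t' e) :=
  Relation.ReflTransGen.lift (fun x => BCm.cut x e) (fun _ _ h => JC.cutL e h) _ _ h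

theorem star_cutR {R1 R2} (t : BTm) {e e' : BCt} (h : Star (JE R1 R2) e e') :
    Star (JC R1 R2) (.cut t e) (.cut t e') :=
  Relation.ReflTransGen.lift (fun x => BCm.cut t x) (fun _ _ h => JC.cutR t h) _ _ h

theorem star_tmuC {R1 R2} {c c' : BCm} (h : Star (JC R1 R2) c c') :
    Star (JE R1 R2) (.tmu c) (.tmu c') :=
  Relation.ReflTransGen.lift BCt.tmu (fun _ _ h => JE.tmuC h) _ _ h

/-! ### Lemma A : translating a filled context -/

theorem bmsub_shiftM (e : BCt) (x : BTm) :
    bmsubT (bsub0M e) (brenMT Nat.succ x) = x := by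
  rw [bmsubT_brenMT]
  exact bmsubT_id _ (fun k => rfl) x

theorem bmsub_shiftLM (e : BCt) (x : BTm) :
    bmsubT (fun k => brenLE Nat.succ (bsub0M e k)) (brenLT Nat.succ (brenMT Nat.succ x)) =
      brenLT Nat.succ x := by
  rw [← brenLT_bmsubT, bmsub_shiftM]

theorem fill_dag : ∀ (e : Ct) (t : Tm),
    Star LBStepC (dagC (fill e t)) (.cut (dagT t) (dagE e))
  | .cvar a, t => .refl
  | .push b u, t => by
      refine Relation.ReflTransGen.single ?_
      show LBStepC (.cut (dagT (.app u t)) (.cvar b)) _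
      have step := JC.root (R1 := BRootT)
        (BRootClin.mu (.cut (brenMT Nat.succ (dagT t))
          (.tmu (.cut (brenLT Nat.succ (brenMT Nat.succ (dagT u)))
            (.cons (.var 0) (.cvar 0))))) (.cvar b) (Or.inl ⟨b, rfl⟩))
      convert step using 1
      · rfl
      simp only [bmsubC, bmsubT, bmsubE, dagE, bmsub_shiftM, bmsub_shiftLM]
      rfl
  | .cons h u, t => by
      refine (fill_dag h (.app t u)).trans ?_
      have cnt1 : bcntMC 0 (BCm.cut (brenMT Nat.succ (dagT u))
          (.tmu (.cut (brenLT Nat.succ (brenMT Nat.succ (dagT t)))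
            (.cons (.var 0) (.cvar 0))))) = 1 := by
        simp only [bcntMC, bcntMT, bcntME,
          bcntM_brenM0 Nat.succ 0 (fun k => Nat.succ_ne_zero k) (dagT u),
          bcntM_brenL Nat.succ 0 (brenMT Nat.succ (dagT t)),
          bcntM_brenM0 Nat.succ 0 (fun k => Nat.succ_ne_zero k) (dagT t)]
        simp
      refine Relation.ReflTransGen.head (JC.root (BRootClin.mu _ (dagE h) (Or.inr cnt1))) ?_
      have mid : bmsubC (bsub0M (dagE h)) (BCm.cut (brenMT Nat.succ (dagT u))
          (.tmu (.cut (brenLT Nat.succ (brenMT Nat.succ (dagT t)))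
            (.cons (.var 0) (.cvar 0))))) =
          BCm.cut (dagT u) (.tmu (.cut (brenLT Nat.succ (dagT t))
            (.cons (.var 0) (brenLE Nat.succ (dagE h))))) := by
        simp only [bmsubC, bmsubT, bmsubE, bmsub_shiftM, bmsub_shiftLM]
        rfl
      rw [mid]
      have cnt2 : bcntLC 0 (BCm.cut (brenLT Nat.succ (dagT t))
          (.cons (.var 0) (brenLE Nat.succ (dagE h)))) = 1 := by
        simp only [bcntLC, bcntLT, bcntLE,
          bcntL_brenL0 Nat.succ 0 (fun k => Nat.succ_ne_zero k) (dagT t),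
          bcntLE_brenLE0 Nat.succ 0 (fun k => Nat.succ_ne_zero k) (dagE h)]
        simp
      refine Relation.ReflTransGen.head (JC.root (BRootClin.mutilde _ _ (Or.inr cnt2))) ?_
      have fin : blsubC (bsub0L (dagT u)) (BCm.cut (brenLT Nat.succ (dagT t))
          (.cons (.var 0) (brenLE Nat.succ (dagE h)))) =
          BCm.cut (dagT t) (dagE (.cons h u)) := by
        simp only [blsubC, blsubT, blsubE, dagE]
        rw [blsubT_brenLT, blsubE_brenLE]
        rw [blsubT_id (fun k => bsub0L (dagT u) (Nat.succ k)) (fun k => rfl) (dagT t),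
          blsubE_id (fun k => bsub0L (dagT u) (Nat.succ k)) (fun k => rfl) (dagE h)]
        rfl
      rw [fin]
/-! ### Lemma B : the translation and structural substitution -/

mutual
theorem msub_dagT (σ : ℕ → Ct) :
    ∀ t, Star LBStepT (dagT (msubT σ t)) (bmsubT (fun k => dagE (σ k)) (dagT t))
  | .var x => .refl
  | .abs t => by
      have ih := msub_dagT (fun k => renLE Nat.succ (σ k)) t
      have e1 : (fun k => dagE (renLE Nat.succ (σ k))) =
          (fun k => brenLE Nat.succ (dagE (σ k))) := funext fun k => dagE_renL Nat.succ (σ k)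
      rw [e1] at ih
      exact star_absC ih
  | .mabs c => by
      have ih := msub_dagC (upsM σ) c
      have e1 : (fun k => dagE (upsM σ k)) = bupsM (fun k => dagE (σ k)) := by
        funext k
        cases k with
        | zero => rfl
        | succ k => show dagE (renME Nat.succ (σ k)) = _; rw [dagE_renM]; rfl
      rw [e1] at ih
      exact star_mabsC ih
  | .app t u => by
      have iht := star_LBStepT_renL Nat.succ
        (star_LBStepT_renM Nat.succ (msub_dagT σ t))
      have ihu := star_LBStepT_renM Nat.succ (msub_dagT σ u)
      have steps : Star LBStepT (dagT (msubT σ (.app t u)))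
          (.mabs (.cut (brenMT Nat.succ (bmsubT (fun k => dagE (σ k)) (dagT u)))
            (.tmu (.cut (brenLT Nat.succ (brenMT Nat.succ
                (bmsubT (fun k => dagE (σ k)) (dagT t))))
              (.cons (.var 0) (.cvar 0)))))) := by
        refine star_mabsC (.trans (star_cutL _ ihu) (star_cutR _ (star_tmuC (star_cutL _ iht))))
      refine steps.trans ?_
      have : (BTm.mabs (.cut (brenMT Nat.succ (bmsubT (fun k => dagE (σ k)) (dagT u)))
            (.tmu (.cut (brenLT Nat.succ (brenMT Nat.succ
                (bmsubT (fun k => dagE (σ k)) (dagT t))))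
              (.cons (.var 0) (.cvar 0)))))) =
          bmsubT (fun k => dagE (σ k)) (dagT (.app t u)) := by
        simp only [dagT, bmsubT, bmsubC, bmsubE]
        rw [brenMT_bmsubT, bmsubT_brenMT, brenMT_bmsubT, ← brenLT_bmsubT, bmsubT_brenMT]
        rfl
      rw [this]
theorem msub_dagC (σ : ℕ → Ct) :
    ∀ c, Star LBStepC (dagC (msubC σ c)) (bmsubC (fun k => dagE (σ k)) (dagC c))
  | .cmd a t => by
      refine (fill_dag (σ a) (msubT σ t)).trans ?_
      exact star_cutL (dagE (σ a)) (msub_dagT σ t)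
end
/-! ### Root cases of the simulation -/

theorem sim_rootT {t v : Tm} (h : RootT t v) :
    ∃ u : BTm, Star BStepT (dagT t) u ∧ Star LBStepT (dagT v) u := by
  cases h with
  | beta u t =>
      refine ⟨dagT (lsubT (sub0L t) u), ?_, .refl⟩
      simp only [dagT, brenMT, brenLT]
      refine Relation.ReflTransGen.head
        (JT.mabsC (JC.cutR _ (JE.tmuC (JC.root (BRootC.beta _ (.var 0) (.cvar 0)))))) ?_
      refine Relation.ReflTransGen.head
        (JT.mabsC (JC.root (BRootC.mutilde _ _))) ?_
      simp only [blsubC, blsubT, blsubE, bsub0L, bupsL, brenLE]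
      have hW : blsubT (fun k => bupsL (bsub0L (brenMT Nat.succ (dagT t))) (upr Nat.succ k))
          (brenMT Nat.succ (dagT u)) = brenMT Nat.succ (dagT u) :=
        blsubT_id _ (fun k => by cases k <;> rfl) _
      rw [blsubT_brenLT, hW]
      refine Relation.ReflTransGen.head
        (JT.mabsC (JC.root (BRootC.mutilde _ _))) ?_
      simp only [blsubC, blsubT, blsubE, bsub0L]
      have hsub : blsubT (bsub0L (brenMT Nat.succ (dagT t))) (brenMT Nat.succ (dagT u)) =
          brenMT Nat.succ (dagT (lsubT (sub0L t) u)) := by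
        rw [dagT_lsub (sub0L t) u, brenMT_blsubT]
        exact congrFun (congrArg blsubT (funext fun k => by cases k <;> rfl)) _
      rw [hsub]
      exact Relation.ReflTransGen.single (JT.root (BRootT.theta _))
  | mu c t =>
      refine ⟨.mabs (bmsubC (fun k => dagE (sub1M 0 (.cons (.cvar 0) (renMT Nat.succ t)) k))
        (dagC c)), ?_, star_mabsC (msub_dagC _ c)⟩
      simp only [dagT, brenMT, brenLT]
      refine Relation.ReflTransGen.head
        (JT.mabsC (JC.root (BRootC.mutilde _ _))) ?_
      simp only [blsubC, blsubT, blsubE]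
      rw [show bsub0L (brenMT Nat.succ (dagT t)) 0 = brenMT Nat.succ (dagT t) from rfl]
      have hC : blsubC (fun k => brenMT Nat.succ (bsub0L (brenMT Nat.succ (dagT t)) k))
          (brenLC Nat.succ (brenMC (upr Nat.succ) (dagC c))) =
          brenMC (upr Nat.succ) (dagC c) := by
        rw [blsubC_brenLC]
        exact blsubC_id _ (fun k => rfl) _
      rw [hC]
      refine Relation.ReflTransGen.head
        (JT.mabsC (JC.root (BRootC.mu _ _))) ?_
      have : bmsubC (bsub0M (.cons (brenMT Nat.succ (dagT t)) (.cvar 0)))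
          (brenMC (upr Nat.succ) (dagC c)) =
          bmsubC (fun k => dagE (sub1M 0 (.cons (.cvar 0) (renMT Nat.succ t)) k)) (dagC c) := by
        rw [bmsubC_brenMC]
        refine congrFun (congrArg bmsubC (funext fun k => ?_)) (dagC c)
        cases k with
        | zero => simp [upr, bsub0M, sub1M, dagE, dagT_renM]
        | succ k => simp [upr, bsub0M, sub1M, dagE]
      rw [this]
  | mu' t c =>
      refine ⟨.mabs (bmsubC (fun k => dagE (sub1M 0 (.push 0 (renMT Nat.succ t)) k))
        (dagC c)), ?_, star_mabsC (msub_dagC _ c)⟩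
      simp only [dagT, brenMT, brenLT]
      refine Relation.ReflTransGen.head
        (JT.mabsC (JC.root (BRootC.mu _ _))) ?_
      have : bmsubC (bsub0M (.tmu (.cut (brenLT Nat.succ (brenMT Nat.succ (dagT t)))
            (.cons (.var 0) (.cvar 0)))))
          (brenMC (upr Nat.succ) (dagC c)) =
          bmsubC (fun k => dagE (sub1M 0 (.push 0 (renMT Nat.succ t)) k)) (dagC c) := by
        rw [bmsubC_brenMC]
        refine congrFun (congrArg bmsubC (funext fun k => ?_)) (dagC c)
        cases k with
        | zero => simp [upr, bsub0M, sub1M, dagE, dagT_renM]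
        | succ k => simp [upr, bsub0M, sub1M, dagE]
      rw [this]
  | theta t0 =>
      refine ⟨dagT v, ?_, .refl⟩
      simp only [dagT, dagC, dagT_renM]
      exact Relation.ReflTransGen.single (JT.root (BRootT.theta _))

theorem sim_rootC {c d : Cm} (h : RootC c d) :
    ∃ u : BCm, Star BStepC (dagC c) u ∧ Star LBStepC (dagC d) u := by
  cases h with
  | rho b c =>
      refine ⟨bmsubC (bsub0M (.cvar b)) (dagC c), ?_, ?_⟩
      · simp only [dagC, dagT]
        exact Relation.ReflTransGen.single (JC.root (BRootC.mu _ _))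
      · have := msub_dagC (sub0M (.cvar b)) c
        have e1 : (fun k => dagE (sub0M (.cvar b) k)) = bsub0M (.cvar b) :=
          funext fun k => by cases k <;> rfl
        rwa [e1] at this

/-! ### The simulation theorem -/

mutual
theorem simT : ∀ {t v : Tm}, StepT t v →
    ∃ u : BTm, Star BStepT (dagT t) u ∧ Star LBStepT (dagT v) u
  | _, _, .root h => sim_rootT h
  | _, _, .absC h => by
      obtain ⟨u, h1, h2⟩ := simT h
      exact ⟨.abs u, star_absC h1, star_absC h2⟩
  | _, _, .appL u0 h => by
      obtain ⟨w, h1, h2⟩ := simT h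
      refine ⟨.mabs (.cut (brenMT Nat.succ (dagT u0))
        (.tmu (.cut (brenLT Nat.succ (brenMT Nat.succ w)) (.cons (.var 0) (.cvar 0))))), ?_, ?_⟩
      · exact star_mabsC (star_cutR _ (star_tmuC (star_cutL _
          (star_BStepT_renL Nat.succ (star_BStepT_renM Nat.succ h1)))))
      · exact star_mabsC (star_cutR _ (star_tmuC (star_cutL _
          (star_LBStepT_renL Nat.succ (star_LBStepT_renM Nat.succ h2)))))
  | _, _, .appR t0 h => by
      obtain ⟨w, h1, h2⟩ := simT h
      refine ⟨.mabs (.cut (brenMT Nat.succ w)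
        (.tmu (.cut (brenLT Nat.succ (brenMT Nat.succ (dagT t0)))
          (.cons (.var 0) (.cvar 0))))), ?_, ?_⟩
      · exact star_mabsC (star_cutL _ (star_BStepT_renM Nat.succ h1))
      · exact star_mabsC (star_cutL _ (star_LBStepT_renM Nat.succ h2))
  | _, _, .mabsC h => by
      obtain ⟨w, h1, h2⟩ := simC h
      exact ⟨.mabs w, star_mabsC h1, star_mabsC h2⟩
theorem simC : ∀ {c d : Cm}, StepC c d →
    ∃ u : BCm, Star BStepC (dagC c) u ∧ Star LBStepC (dagC d) u
  | _, _, .root h => sim_rootC h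
  | _, _, .cmdC a h => by
      obtain ⟨w, h1, h2⟩ := simT h
      exact ⟨.cut w (.cvar a), star_cutL _ h1, star_cutL _ h2⟩
end

/-- simulation of λμ by λ̄μμ̃.  If `t` reduces to `v` by one
λμ-step (β, μ, μ', ρ or θ), then there is `u` with `t† →* u` in λ̄μμ̃ and
`v† →lin* u`; and likewise for commands. -/
theorem lm_lmm_simulation :
    (∀ t v : Tm, StepT t v →
      ∃ u : BTm, Star BStepT (dagT t) u ∧ Star LBStepT (dagT v) u) ∧
    (∀ c d : Cm, StepC c d →
      ∃ u : BCm, Star BStepC (dagC c) u ∧ Star LBStepC (dagC d) u) :=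
  ⟨fun _ _ h => simT h, fun _ _ h => simC h⟩

end CHSim
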